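/- For every positive integer m, the function H_m is completely multiplicative: H_m(xy) = H_m(x) · H_m(y) for all positive integers x and y. -/

import Mathlib

open Finset

/-- The Schemmel totient function: `L m 0 = 0`, `L m 1 = 1`, and for `n > 1`,
`L m n = ∏ p^(α-1) (p - m)` over the canonical factorization of `n` if every
prime divisor of `n` exceeds `m`, and `0` otherwise. -/
def L (m n : ℕ) : ℕ :=
  if n ≤ 1 then n
  else if ∀ p ∈ n.primeFactors, m < p then
    ∏ p ∈ n.primeFactors, p ^ (n.factorization p - 1) * (p - m)
  else 0

/-- `R m n` is the least positive `k` with `L_m^{(k)}(n) ∈ {0, 1}`. -/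
noncomputable def R (m n : ℕ) : ℕ :=
  sInf {k | 0 < k ∧ ((L m)^[k] n = 0 ∨ (L m)^[k] n = 1)}

/-- `H m n = L_m^{(R_m(n))}(n)`. -/
noncomputable def H (m n : ℕ) : ℕ := (L m)^[R m n] n

/-- `D m 1 = 0` and `D m n = ∑_{i=1}^{R_m(n)} L_m^{(i)}(n)` for `n > 1`. -/
noncomputable def D (m n : ℕ) : ℕ :=
  if n = 1 then 0 else ∑ i ∈ Finset.Icc 1 (R m n), (L m)^[i] n

lemma L_zero (m : ℕ) : L m 0 = 0 := by simp [L]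
lemma L_one (m : ℕ) : L m 1 = 1 := by simp [L]

lemma iter_L_one (m k : ℕ) : (L m)^[k] 1 = 1 := by
  induction k with
  | zero => rfl
  | succ k ih => rw [Function.iterate_succ_apply', ih, L_one]

lemma iter_L_zero (m k : ℕ) : (L m)^[k] 0 = 0 := by
  induction k with
  | zero => rfl
  | succ k ih => rw [Function.iterate_succ_apply', ih, L_zero]

lemma prod_primeFactors_eq {n : ℕ} (hn : n ≠ 0) :
    ∏ p ∈ n.primeFactors, p ^ n.factorization p = n := by
  rw [← Nat.support_factorization]
  exact Nat.factorization_prod_pow_eq_self hn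

lemma L_lt {m n : ℕ} (hm : 0 < m) (hn : 2 ≤ n) : L m n < n := by
  have hn1 : ¬ n ≤ 1 := by omega
  rw [L, if_neg hn1]
  split_ifs with hp
  · have hne : n ≠ 0 := by omega
    calc ∏ p ∈ n.primeFactors, p ^ (n.factorization p - 1) * (p - m)
        < ∏ p ∈ n.primeFactors, p ^ n.factorization p := by
          apply Finset.prod_lt_prod_of_nonempty
          · intro p hpmem
            have hpp : p.Prime := Nat.prime_of_mem_primeFactors hpmem
            have := hp p hpmem
            exact Nat.mul_pos (Nat.pow_pos hpp.pos) (by omega)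
          · intro p hpmem
            have hpp : p.Prime := Nat.prime_of_mem_primeFactors hpmem
            have hfp : 0 < n.factorization p :=
              Nat.Prime.factorization_pos_of_dvd hpp hne (Nat.dvd_of_mem_primeFactors hpmem)
            have hlt : p - m < p := by have := hpp.two_le; omega
            calc p ^ (n.factorization p - 1) * (p - m)
                < p ^ (n.factorization p - 1) * p :=
                  (Nat.mul_lt_mul_left (Nat.pow_pos hpp.pos)).mpr hlt
              _ = p ^ n.factorization p := by
                  rw [← pow_succ]; congr 1; omega
          · exact Nat.nonempty_primeFactors.mpr hn
      _ = n := prod_primeFactors_eq hne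
  · omega

lemma L_dvd {m d n : ℕ} (h : d ∣ n) : L m d ∣ L m n := by
  rcases Nat.eq_zero_or_pos n with rfl | hn
  · simp [L_zero]
  rcases Nat.lt_or_ge n 2 with hn2 | hn2
  · interval_cases n
    rw [Nat.dvd_one] at h; subst h; simp [L_one]
  have hd0 : d ≠ 0 := by rintro rfl; rw [Nat.zero_dvd] at h; omega
  rcases Nat.lt_or_ge d 2 with hd2 | hd2
  · have : d = 1 := by omega
    subst this
    rw [L_one]; exact one_dvd _
  have hn1 : ¬ n ≤ 1 := by omega
  have hd1 : ¬ d ≤ 1 := by omega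
  by_cases hp : ∀ p ∈ n.primeFactors, m < p
  · have hpd : ∀ p ∈ d.primeFactors, m < p := fun p hpmem =>
      hp p (Nat.primeFactors_mono h (by omega) hpmem)
    have hLn : L m n = ∏ p ∈ n.primeFactors, p ^ (n.factorization p - 1) * (p - m) := by
      rw [L, if_neg hn1, if_pos hp]
    have hLd : L m d = ∏ p ∈ d.primeFactors, p ^ (d.factorization p - 1) * (p - m) := by
      rw [L, if_neg hd1, if_pos hpd]
    rw [hLn, hLd]
    have hsub : d.primeFactors ⊆ n.primeFactors := Nat.primeFactors_mono h (by omega)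
    have hle : d.factorization ≤ n.factorization :=
      (Nat.factorization_le_iff_dvd hd0 (by omega)).mpr h
    calc ∏ p ∈ d.primeFactors, p ^ (d.factorization p - 1) * (p - m)
        ∣ ∏ p ∈ d.primeFactors, p ^ (n.factorization p - 1) * (p - m) := by
          apply Finset.prod_dvd_prod_of_dvd
          intro p hpmem
          exact mul_dvd_mul (pow_dvd_pow p (by have := hle p; omega)) dvd_rfl
      _ ∣ ∏ p ∈ n.primeFactors, p ^ (n.factorization p - 1) * (p - m) :=
          Finset.prod_dvd_prod_of_subset _ _ _ hsub
  · have : L m n = 0 := by rw [L, if_neg hn1, if_neg hp]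
    simp [this]

lemma iter_L_dvd {m : ℕ} (k : ℕ) {d n : ℕ} (h : d ∣ n) : (L m)^[k] d ∣ (L m)^[k] n := by
  induction k with
  | zero => exact h
  | succ k ih =>
      rw [Function.iterate_succ_apply', Function.iterate_succ_apply']
      exact L_dvd ih

/-- `Good m n` : the iteration of `L m` starting at `n` reaches 1. -/
def Good (m n : ℕ) : Prop := ∃ k, (L m)^[k] n = 1

lemma Good.one (m : ℕ) : Good m 1 := ⟨0, rfl⟩

lemma Good.of_dvd {m d n : ℕ} (h : d ∣ n) (hg : Good m n) : Good m d := by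
  obtain ⟨k, hk⟩ := hg
  refine ⟨k, Nat.dvd_one.mp ?_⟩
  rw [← hk]
  exact iter_L_dvd k h

lemma L_prime {m p : ℕ} (hp : p.Prime) (hmp : m < p) : L m p = p - m := by
  rw [L, if_neg (by have := hp.two_le; omega), if_pos]
  · rw [hp.primeFactors, Finset.prod_singleton, Nat.Prime.factorization_self hp]
    simp
  · intro q hq
    rw [hp.primeFactors, Finset.mem_singleton] at hq
    subst hq; exact hmp

lemma Good.prime_gt {m p : ℕ} (hp : p.Prime) (hg : Good m p) : m < p := by
  by_contra hmp
  push_neg at hmp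
  have hL : L m p = 0 := by
    rw [L, if_neg (by have := hp.two_le; omega), if_neg]
    push_neg
    exact ⟨p, by simp [hp.primeFactors], hmp⟩
  obtain ⟨k, hk⟩ := hg
  rcases Nat.eq_zero_or_pos k with rfl | hk0
  · simp at hk; exact absurd hk (by have := hp.two_le; omega)
  · have : (L m)^[k] p = 0 := by
      obtain ⟨k, rfl⟩ : ∃ k', k = k' + 1 := ⟨k - 1, by omega⟩
      rw [Function.iterate_succ_apply, hL, iter_L_zero]
    omega

lemma Good.L_good {m n : ℕ} (hn : n ≠ 1) (hg : Good m n) : Good m (L m n) := by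
  obtain ⟨k, hk⟩ := hg
  rcases Nat.eq_zero_or_pos k with rfl | hk0
  · exact absurd hk hn
  obtain ⟨k, rfl⟩ : ∃ k', k = k' + 1 := ⟨k - 1, by omega⟩
  rw [Function.iterate_succ_apply] at hk
  exact ⟨k, hk⟩

/-- Characterization: a nonzero `n` is good iff all its prime factors are good. -/
lemma good_iff_forall {m : ℕ} (hm : 0 < m) : ∀ n : ℕ, n ≠ 0 →
    (Good m n ↔ ∀ p ∈ n.primeFactors, Good m p) := by
  intro n
  induction n using Nat.strong_induction_on with
  | _ n ih =>
    intro hn0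
    constructor
    · intro hg p hp
      exact hg.of_dvd (Nat.dvd_of_mem_primeFactors hp)
    · intro hall
      rcases Nat.lt_or_ge n 2 with hn2 | hn2
      · have : n = 1 := by omega
        subst this
        exact Good.one m
      have hgt : ∀ p ∈ n.primeFactors, m < p := fun p hp =>
        (hall p hp).prime_gt (Nat.prime_of_mem_primeFactors hp)
      have hLn : L m n = ∏ p ∈ n.primeFactors, p ^ (n.factorization p - 1) * (p - m) := by
        rw [L, if_neg (by omega), if_pos hgt]
      have hLpos : 0 < L m n := by
        rw [hLn]
        apply Finset.prod_pos
        intro p hp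
        have hpp := Nat.prime_of_mem_primeFactors hp
        have := hgt p hp
        exact Nat.mul_pos (Nat.pow_pos hpp.pos) (by omega)
      have hLlt : L m n < n := L_lt hm hn2
      have hLgood : Good m (L m n) := by
        apply (ih (L m n) hLlt (by omega)).mpr
        intro q hq
        have hqp : q.Prime := Nat.prime_of_mem_primeFactors hq
        have hqdvd : q ∣ L m n := Nat.dvd_of_mem_primeFactors hq
        rw [hLn] at hqdvd
        obtain ⟨p, hpmem, hpdvd⟩ := hqp.prime.exists_mem_finset_dvd hqdvd
        have hpp := Nat.prime_of_mem_primeFactors hpmem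
        rcases hqp.prime.dvd_mul.mp hpdvd with h1 | h2
        · have hqep : q = p :=
            (Nat.prime_dvd_prime_iff_eq hqp hpp).mp (hqp.dvd_of_dvd_pow h1)
          exact hqep ▸ hall p hpmem
        · have hpgood := hall p hpmem
          have hLp : L m p = p - m := L_prime hpp (hgt p hpmem)
          have hgpm : Good m (p - m) :=
            hLp ▸ hpgood.L_good (by have := hpp.two_le; omega)
          exact hgpm.of_dvd h2
      obtain ⟨k, hk⟩ := hLgood
      exact ⟨k + 1, by rw [Function.iterate_succ_apply]; exact hk⟩

lemma exists_iter {m : ℕ} (hm : 0 < m) :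
    ∀ n, ∃ k, 0 < k ∧ ((L m)^[k] n = 0 ∨ (L m)^[k] n = 1) := by
  intro n
  induction n using Nat.strong_induction_on with
  | _ n ih =>
    rcases Nat.lt_or_ge n 2 with h | h
    · refine ⟨1, one_pos, ?_⟩
      interval_cases n <;> simp [L_zero, L_one]
    · obtain ⟨k, hk, hor⟩ := ih (L m n) (L_lt hm h)
      exact ⟨k + 1, by omega, by rwa [Function.iterate_succ_apply]⟩

lemma R_mem {m n : ℕ} (hm : 0 < m) :
    0 < R m n ∧ ((L m)^[R m n] n = 0 ∨ (L m)^[R m n] n = 1) := by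
  have hne : {k | 0 < k ∧ ((L m)^[k] n = 0 ∨ (L m)^[k] n = 1)}.Nonempty := by
    obtain ⟨k, h1, h2⟩ := exists_iter hm n
    exact ⟨k, h1, h2⟩
  exact Nat.sInf_mem hne

lemma H_zero_or_one {m n : ℕ} (hm : 0 < m) : H m n = 0 ∨ H m n = 1 :=
  (R_mem hm).2

lemma H_eq_one_iff {m n : ℕ} (hm : 0 < m) : H m n = 1 ↔ Good m n := by
  obtain ⟨hR, hor⟩ := R_mem (m := m) (n := n) hm
  constructor
  · intro h
    exact ⟨R m n, h⟩
  · rintro ⟨k, hk⟩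
    rcases hor with h0 | h1
    · exfalso
      rcases le_or_gt (R m n) k with hle | hlt
      · have : (L m)^[k] n = 0 := by
          rw [← Nat.sub_add_cancel hle, Function.iterate_add_apply, h0, iter_L_zero]
        omega
      · rcases Nat.eq_zero_or_pos k with rfl | hk0
        · simp only [Function.iterate_zero, id_eq] at hk
          subst hk
          rw [iter_L_one] at h0
          omega
        · have hmem : k ∈ {k | 0 < k ∧ ((L m)^[k] n = 0 ∨ (L m)^[k] n = 1)} :=
            ⟨hk0, Or.inr hk⟩
          have : R m n ≤ k := Nat.sInf_le hmem
          omega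
    · exact h1

lemma H_eq_zero_of_not_good {m n : ℕ} (hm : 0 < m) (h : ¬ Good m n) : H m n = 0 := by
  rcases H_zero_or_one (m := m) (n := n) hm with h0 | h1
  · exact h0
  · exact absurd ((H_eq_one_iff hm).mp h1) h

theorem H_completely_multiplicative (m : ℕ) (hm : 0 < m) (x y : ℕ)
    (hx : 0 < x) (hy : 0 < y) : H m (x * y) = H m x * H m y := by
  by_cases hgx : Good m x
  · by_cases hgy : Good m y
    · have hgxy : Good m (x * y) := by
        rw [good_iff_forall hm (x * y) (by positivity)]
        intro p hp
        rw [Nat.primeFactors_mul hx.ne' hy.ne', Finset.mem_union] at hp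
        rcases hp with hp | hp
        · exact ((good_iff_forall hm x hx.ne').mp hgx) p hp
        · exact ((good_iff_forall hm y hy.ne').mp hgy) p hp
      rw [(H_eq_one_iff hm).mpr hgxy, (H_eq_one_iff hm).mpr hgx,
        (H_eq_one_iff hm).mpr hgy]
    · have hgxy : ¬ Good m (x * y) := fun h => hgy (h.of_dvd ⟨x, mul_comm x y⟩)
      rw [H_eq_zero_of_not_good hm hgxy, H_eq_zero_of_not_good hm hgy, mul_zero]
  · have hgxy : ¬ Good m (x * y) := fun h => hgx (h.of_dvd ⟨y, rfl⟩)
    rw [H_eq_zero_of_not_good hm hgxy, H_eq_zero_of_not_good hm hgx, zero_mul]
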